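/- arXiv:math/0410364 — 2 statements merged into one kernel-verified Lean document; each statement's English description precedes it below -/
import Mathlib

section
/- A permutation of {1,...,m} is lsd (lexicographically smallest in its descent class) if and only if every ascent is a global ascent; dually, a permutation is lexicographically largest in its descent class if and only if every descent is a global descent. -/
/-- `w` is a permutation word: a rearrangement of `[1,…,n]` where `n` is its length. -/
def IsPermWord (w : List ℕ) : Prop := w.Perm (List.range' 1 w.length)

/-- The descent set of a word `[a₁,…,aₘ]` : those `i ∈ {1,…,m−1}` with `aᵢ > a_{i+1}`. -/
def descSet (w : List ℕ) : Finset ℕ :=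
  (Finset.Ioo 0 w.length).filter (fun i => w.getD i 0 < w.getD (i - 1) 0)

/-- The `i`-th letter of a word (1-based). -/
def entry (σ : List ℕ) (i : ℕ) : ℕ := σ.getD (i - 1) 0

/-- `p` is an ascent of `σ` : `a_p < a_{p+1}`. -/
def IsAscent (σ : List ℕ) (p : ℕ) : Prop := entry σ p < entry σ (p + 1)

/-- `p` is a descent of `σ` : `a_p > a_{p+1}`. -/
def IsDescent (σ : List ℕ) (p : ℕ) : Prop := entry σ (p + 1) < entry σ p

/-- `p` is a global ascent of `σ` : `aᵢ < aⱼ` for all `i ≤ p < j`. -/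
def IsGlobalAscent (σ : List ℕ) (p : ℕ) : Prop :=
  ∀ i j : ℕ, 1 ≤ i → i ≤ p → p < j → j ≤ σ.length → entry σ i < entry σ j

/-- `p` is a global descent of `σ` : `aᵢ > aⱼ` for all `i ≤ p < j`. -/
def IsGlobalDescent (σ : List ℕ) (p : ℕ) : Prop :=
  ∀ i j : ℕ, 1 ≤ i → i ≤ p → p < j → j ≤ σ.length → entry σ j < entry σ i

/-- Lexicographic order on words. -/
def lexLE (σ τ : List ℕ) : Prop := σ = τ ∨ List.Lex (· < ·) σ τ


open List Finset

instance (σ : List ℕ) (p : ℕ) : Decidable (IsDescent σ p) := by unfold IsDescent; infer_instance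
instance (σ : List ℕ) (p : ℕ) : Decidable (IsAscent σ p) := by unfold IsAscent; infer_instance

lemma entry_eq_getElem (σ : List ℕ) (q : ℕ) (h2 : q - 1 < σ.length) :
    entry σ q = σ[q-1] := by
  simp [entry, List.getD_eq_getElem?_getD, List.getElem?_eq_getElem h2]

lemma entry_drop (σ : List ℕ) (b r : ℕ) (hr : 1 ≤ r) :
    entry (σ.drop b) r = entry σ (b + r) := by
  simp only [entry, List.getD_eq_getElem?_getD, List.getElem?_drop]
  congr 2
  omega

lemma isDescent_drop (σ : List ℕ) (b r : ℕ) (hr : 1 ≤ r) :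
    IsDescent (σ.drop b) r ↔ IsDescent σ (b + r) := by
  unfold IsDescent
  rw [entry_drop σ b r hr, entry_drop σ b (r+1) (by omega), ← Nat.add_assoc]

lemma isAscent_drop (σ : List ℕ) (b r : ℕ) (hr : 1 ≤ r) :
    IsAscent (σ.drop b) r ↔ IsAscent σ (b + r) := by
  unfold IsAscent
  rw [entry_drop σ b r hr, entry_drop σ b (r+1) (by omega), ← Nat.add_assoc]

lemma permword_nodup {σ : List ℕ} (h : IsPermWord σ) : σ.Nodup :=
  h.nodup_iff.mpr (List.nodup_range' (h := Nat.one_pos))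

lemma permword_mem {σ : List ℕ} (h : IsPermWord σ) {x : ℕ} :
    x ∈ σ ↔ 1 ≤ x ∧ x ≤ σ.length := by
  rw [h.mem_iff, List.mem_range'_1]; omega

lemma entry_mem (σ : List ℕ) (q : ℕ) (h1 : 1 ≤ q) (h2 : q ≤ σ.length) :
    entry σ q ∈ σ := by
  rw [entry_eq_getElem σ q (by omega)]; exact List.getElem_mem _

lemma entry_bounds {σ : List ℕ} (h : IsPermWord σ) {q : ℕ} (h1 : 1 ≤ q) (h2 : q ≤ σ.length) :
    1 ≤ entry σ q ∧ entry σ q ≤ σ.length :=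
  (permword_mem h).mp (entry_mem σ q h1 h2)

lemma entry_inj {σ : List ℕ} (h : IsPermWord σ) {q q' : ℕ} (h1 : 1 ≤ q) (h2 : q ≤ σ.length)
    (h1' : 1 ≤ q') (h2' : q' ≤ σ.length) (hne : q ≠ q') : entry σ q ≠ entry σ q' := by
  rw [entry_eq_getElem σ q (by omega), entry_eq_getElem σ q' (by omega)]
  intro heq
  have := (List.Nodup.getElem_inj_iff (permword_nodup h)).mp heq
  omega

lemma ascent_or_descent {σ : List ℕ} (h : IsPermWord σ) {p : ℕ} (h1 : 1 ≤ p)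
    (h2 : p + 1 ≤ σ.length) : IsAscent σ p ∨ IsDescent σ p := by
  have := entry_inj h h1 (by omega) (show 1 ≤ p+1 by omega) h2 (by omega)
  unfold IsAscent IsDescent
  omega

lemma exists_entry_eq {σ : List ℕ} (h : IsPermWord σ) {v : ℕ} (hv1 : 1 ≤ v)
    (hv2 : v ≤ σ.length) : ∃ q, 1 ≤ q ∧ q ≤ σ.length ∧ entry σ q = v := by
  have hm : v ∈ σ := (permword_mem h).mpr ⟨hv1, hv2⟩
  obtain ⟨n, hn, he⟩ := List.mem_iff_getElem.mp hm
  exact ⟨n+1, by omega, by omega, by rw [entry_eq_getElem σ (n+1) (by omega)]; simpa⟩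

lemma mem_descSet {w : List ℕ} {i : ℕ} :
    i ∈ descSet w ↔ (0 < i ∧ i < w.length ∧ IsDescent w i) := by
  simp only [descSet, Finset.mem_filter, Finset.mem_Ioo, IsDescent, entry]
  constructor
  · rintro ⟨⟨a, b⟩, c⟩; refine ⟨a, b, ?_⟩; simpa using c
  · rintro ⟨a, b, c⟩; exact ⟨⟨a, b⟩, by simpa using c⟩

-- lex: first difference implies Lex
lemma lex_of_firstDiff : ∀ (l1 l2 : List ℕ) (k : ℕ), k < l1.length → k < l2.length →
    (∀ i, i < k → l1.getD i 0 = l2.getD i 0) → l1.getD k 0 < l2.getD k 0 →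
    List.Lex (· < ·) l1 l2 := by
  intro l1
  induction l1 with
  | nil => intro l2 k hk; simp at hk
  | cons a t1 ih =>
    intro l2 k hk1 hk2 hpre hlt
    cases l2 with
    | nil => simp at hk2
    | cons b t2 =>
      cases k with
      | zero => exact List.Lex.rel (by simpa using hlt)
      | succ k =>
        have hab : a = b := by have := hpre 0 (by omega); simpa using this
        subst hab
        exact List.Lex.cons (ih t2 k (by simpa using hk1) (by simpa using hk2)
          (fun i hi => by have := hpre (i+1) (by omega); simpa using this)
          (by simpa using hlt))

lemma exists_firstDiff {l1 l2 : List ℕ} (hlen : l1.length = l2.length) (hne : l1 ≠ l2) :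
    ∃ k, k < l1.length ∧ (∀ i, i < k → l1.getD i 0 = l2.getD i 0) ∧
      l1.getD k 0 ≠ l2.getD k 0 := by
  have hex : ∃ k, k < l1.length ∧ l1.getD k 0 ≠ l2.getD k 0 := by
    by_contra hc
    push_neg at hc
    apply hne
    apply List.ext_getElem hlen
    intro i hi1 hi2
    have := hc i
    rcases Nat.lt_or_ge i l1.length with h | h
    · have h2 := this hi1
      rwa [List.getD_eq_getElem?_getD, List.getD_eq_getElem?_getD,
        List.getElem?_eq_getElem hi1, List.getElem?_eq_getElem hi2] at h2
    · omega
  classical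
  obtain ⟨hk1, hk2⟩ := Nat.find_spec hex
  refine ⟨Nat.find hex, hk1, fun i hi => ?_, hk2⟩
  by_contra hne'
  exact Nat.find_min hex hi ⟨by omega, hne'⟩

lemma lex_asymm : ∀ {l1 l2 : List ℕ}, List.Lex (· < ·) l1 l2 → List.Lex (· < ·) l2 l1 → False := by
  intro l1 l2 h
  induction h with
  | nil => intro h2; cases h2
  | @cons a t1 t2 h ih => intro h2; cases h2 with
    | cons h3 => exact ih h3
    | rel h3 => omega
  | @rel a t1 b t2 h => intro h2; cases h2 with
    | cons h3 => omega
    | rel h3 => omega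

-- decreasing run
lemma run_le_desc {w : List ℕ} {p s : ℕ}
    (hrun : ∀ t, p ≤ t → t < s → IsDescent w t) :
    ∀ q, p ≤ q → q ≤ s → entry w q ≤ entry w p := by
  intro q hq
  induction q, hq using Nat.le_induction with
  | base => intro _; exact le_rfl
  | succ q hpq ih =>
    intro hqs
    have hd := hrun q hpq (by omega)
    exact le_trans (le_of_lt hd) (ih (by omega))

lemma run_lt_desc {w : List ℕ} {p s q : ℕ}
    (hrun : ∀ t, p ≤ t → t < s → IsDescent w t) (h1 : p < q) (h2 : q ≤ s) :
    entry w q < entry w p := by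
  have h3 : entry w q ≤ entry w (p+1) :=
    run_le_desc (fun t ht1 ht2 => hrun t (by omega) ht2) q (by omega) h2
  exact lt_of_le_of_lt h3 (hrun p le_rfl (by omega))

lemma run_ge_asc {w : List ℕ} {p s : ℕ}
    (hrun : ∀ t, p ≤ t → t < s → IsAscent w t) :
    ∀ q, p ≤ q → q ≤ s → entry w p ≤ entry w q := by
  intro q hq
  induction q, hq using Nat.le_induction with
  | base => intro _; exact le_rfl
  | succ q hpq ih =>
    intro hqs
    have hd := hrun q hpq (by omega)
    exact le_trans (ih (by omega)) (le_of_lt hd)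

lemma run_gt_asc {w : List ℕ} {p s q : ℕ}
    (hrun : ∀ t, p ≤ t → t < s → IsAscent w t) (h1 : p < q) (h2 : q ≤ s) :
    entry w p < entry w q := by
  have h3 : entry w (p+1) ≤ entry w q :=
    run_ge_asc (fun t ht1 ht2 => hrun t (by omega) ht2) q (by omega) h2
  exact lt_of_lt_of_le (hrun p le_rfl (by omega)) h3

-- counting
lemma count_pred {σ : List ℕ} (h : IsPermWord σ) (P : ℕ → Prop) [DecidablePred P] :
    ((Finset.Icc 1 σ.length).filter (fun q => P (entry σ q))).card
      = ((Finset.Icc 1 σ.length).filter P).card := by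
  apply Finset.card_bij (fun q _ => entry σ q)
  · intro q hq
    simp only [Finset.mem_filter, Finset.mem_Icc] at hq ⊢
    exact ⟨⟨(entry_bounds h hq.1.1 hq.1.2).1, (entry_bounds h hq.1.1 hq.1.2).2⟩, hq.2⟩
  · intro q hq q' hq' heq
    simp only [Finset.mem_filter, Finset.mem_Icc] at hq hq'
    by_contra hne
    exact entry_inj h hq.1.1 hq.1.2 hq'.1.1 hq'.1.2 hne heq
  · intro v hv
    simp only [Finset.mem_filter, Finset.mem_Icc] at hv
    obtain ⟨q, hq1, hq2, hq3⟩ := exists_entry_eq h hv.1.1 hv.1.2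
    exact ⟨q, by simp only [Finset.mem_filter, Finset.mem_Icc]; exact ⟨⟨hq1, hq2⟩, by rw [hq3]; exact hv.2⟩, hq3⟩

lemma count_suffix {σ τ : List ℕ} (hσ : IsPermWord σ) (hτ : IsPermWord τ)
    (hlen : τ.length = σ.length) {p : ℕ} (hp1 : 1 ≤ p) (hpm : p ≤ σ.length)
    (hagree : ∀ i, 1 ≤ i → i < p → entry σ i = entry τ i)
    (P : ℕ → Prop) [DecidablePred P] :
    ((Finset.Icc p σ.length).filter (fun q => P (entry σ q))).card
      = ((Finset.Icc p σ.length).filter (fun q => P (entry τ q))).card := by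
  have m_def : True := trivial
  have hsplit : Finset.Icc 1 σ.length = Finset.Icc 1 (p-1) ∪ Finset.Icc p σ.length := by
    ext i; simp only [Finset.mem_union, Finset.mem_Icc]; omega
  have hdisj : Disjoint (Finset.Icc 1 (p-1)) (Finset.Icc p σ.length) := by
    rw [Finset.disjoint_left]
    intro a ha hb
    simp only [Finset.mem_Icc] at ha hb
    omega
  have key : ∀ (w : List ℕ),
      ((Finset.Icc 1 σ.length).filter (fun q => P (entry w q))).card
        = ((Finset.Icc 1 (p-1)).filter (fun q => P (entry w q))).card
          + ((Finset.Icc p σ.length).filter (fun q => P (entry w q))).card := by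
    intro w
    rw [hsplit, Finset.filter_union, Finset.card_union_of_disjoint
      (Finset.disjoint_filter_filter hdisj)]
  have h1 := key σ
  have h2 := key τ
  have hglobσ := count_pred hσ P
  have hglobτ := count_pred hτ P
  rw [hlen] at hglobτ
  have hpre : ((Finset.Icc 1 (p-1)).filter (fun q => P (entry σ q)))
      = ((Finset.Icc 1 (p-1)).filter (fun q => P (entry τ q))) := by
    apply Finset.filter_congr
    intro q hq
    simp only [Finset.mem_Icc] at hq
    rw [hagree q hq.1 (by omega)]
  have hpre' := congrArg Finset.card hpre
  omega

lemma key_lsd (σ τ : List ℕ) (hσ : IsPermWord σ) (hτ : IsPermWord τ)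
    (hlen : τ.length = σ.length) (hdesc : descSet τ = descSet σ)
    (hglob : ∀ p ∈ Finset.Ioo 0 σ.length, IsAscent σ p → IsGlobalAscent σ p) :
    lexLE σ τ := by
  classical
  by_cases heq : σ = τ
  · exact Or.inl heq
  obtain ⟨k, hk, hpre, hne⟩ := exists_firstDiff (hlen.symm) heq
  set p := k + 1 with hp_def
  have hp1 : 1 ≤ p := by omega
  have hpm : p ≤ σ.length := by omega
  have hagree : ∀ i, 1 ≤ i → i < p → entry σ i = entry τ i := by
    intro i h1 h2
    have := hpre (i-1) (by omega)
    simpa [entry] using this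
  have hnep : entry σ p ≠ entry τ p := by
    simpa [entry, hp_def] using hne
  have hexS : ∃ s, p ≤ s ∧ (σ.length ≤ s ∨ ¬ IsDescent σ s) :=
    ⟨σ.length, hpm, Or.inl le_rfl⟩
  set s := Nat.find hexS with hs_def
  obtain ⟨hs1, hs2⟩ := Nat.find_spec hexS
  have hsm : s ≤ σ.length := Nat.find_min' hexS ⟨hpm, Or.inl le_rfl⟩
  have hrun_full : ∀ t, p ≤ t → t < s → (t < σ.length ∧ IsDescent σ t) := by
    intro t ht1 ht2
    have := Nat.find_min hexS ht2
    push_neg at this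
    obtain ⟨h3, h4⟩ := this ht1
    exact ⟨by omega, h4⟩
  have hrunσ : ∀ t, p ≤ t → t < s → IsDescent σ t := fun t h1 h2 => (hrun_full t h1 h2).2
  have hrunτ : ∀ t, p ≤ t → t < s → IsDescent τ t := by
    intro t h1 h2
    have hmem : t ∈ descSet σ :=
      mem_descSet.mpr ⟨by omega, (hrun_full t h1 h2).1, hrunσ t h1 h2⟩
    rw [← hdesc] at hmem
    exact (mem_descSet.mp hmem).2.2
  have hAσ : (Finset.Icc p σ.length).filter (fun q => entry σ q ≤ entry σ p)
      = Finset.Icc p s := by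
    ext q
    simp only [Finset.mem_filter, Finset.mem_Icc]
    constructor
    · rintro ⟨⟨hq1, hq2⟩, hle⟩
      refine ⟨hq1, ?_⟩
      by_contra hqs
      push_neg at hqs
      have hslen : s < σ.length := by omega
      have hnd : ¬ IsDescent σ s := by
        rcases hs2 with h | h
        · omega
        · exact h
      have hasc : IsAscent σ s := by
        rcases ascent_or_descent (p := s) hσ (by omega) (by omega) with h | h
        · exact h
        · exact absurd h hnd
      have hg := hglob s (by simp only [Finset.mem_Ioo]; omega) hasc
      have := hg p q hp1 hs1 hqs hq2
      omega
    · rintro ⟨hq1, hq2⟩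
      exact ⟨⟨hq1, by omega⟩, run_le_desc hrunσ q hq1 hq2⟩
  have hcardσ : ((Finset.Icc p σ.length).filter (fun q => entry σ q ≤ entry σ p)).card
      = s + 1 - p := by rw [hAσ, Nat.card_Icc]
  rcases lt_trichotomy (entry σ p) (entry τ p) with hlt | heq2 | hgt
  · -- good case: σ lex-smaller
    refine Or.inr (lex_of_firstDiff σ τ k hk (by omega) hpre ?_)
    simpa [entry, hp_def] using hlt
  · exact absurd heq2 hnep
  · -- contradiction case
    exfalso
    have hcount := count_suffix hσ hτ hlen hp1 hpm hagree (fun x => x ≤ entry τ p)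
    have hsub1 : Finset.Icc p s ⊆
        (Finset.Icc p σ.length).filter (fun q => entry τ q ≤ entry τ p) := by
      intro q hq
      simp only [Finset.mem_Icc] at hq
      simp only [Finset.mem_filter, Finset.mem_Icc]
      exact ⟨⟨hq.1, by omega⟩, run_le_desc hrunτ q hq.1 hq.2⟩
    have hge : s + 1 - p ≤
        ((Finset.Icc p σ.length).filter (fun q => entry τ q ≤ entry τ p)).card := by
      calc s + 1 - p = (Finset.Icc p s).card := by rw [Nat.card_Icc]
        _ ≤ _ := Finset.card_le_card hsub1
    have hsub2 : (Finset.Icc p σ.length).filter (fun q => entry σ q ≤ entry τ p)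
        ⊆ (Finset.Icc p s).erase p := by
      intro q hq
      simp only [Finset.mem_filter, Finset.mem_Icc] at hq
      have hmem : q ∈ Finset.Icc p s := by
        rw [← hAσ]
        simp only [Finset.mem_filter, Finset.mem_Icc]
        exact ⟨hq.1, by omega⟩
      refine Finset.mem_erase.mpr ⟨?_, hmem⟩
      intro hqp
      subst hqp
      omega
    have hle2 : ((Finset.Icc p σ.length).filter (fun q => entry σ q ≤ entry τ p)).card
        ≤ s - p := by
      calc _ ≤ ((Finset.Icc p s).erase p).card := Finset.card_le_card hsub2
        _ ≤ (Finset.Icc p s).card - 1 := by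
            rw [Finset.card_erase_of_mem (by simp only [Finset.mem_Icc]; omega)]
        _ = s - p := by rw [Nat.card_Icc]; omega
    omega

lemma key_lld (σ τ : List ℕ) (hσ : IsPermWord σ) (hτ : IsPermWord τ)
    (hlen : τ.length = σ.length) (hdesc : descSet τ = descSet σ)
    (hglob : ∀ p ∈ Finset.Ioo 0 σ.length, IsDescent σ p → IsGlobalDescent σ p) :
    lexLE τ σ := by
  classical
  by_cases heq : σ = τ
  · exact Or.inl heq.symm
  obtain ⟨k, hk, hpre, hne⟩ := exists_firstDiff (hlen.symm) heq
  set p := k + 1 with hp_def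
  have hp1 : 1 ≤ p := by omega
  have hpm : p ≤ σ.length := by omega
  have hagree : ∀ i, 1 ≤ i → i < p → entry σ i = entry τ i := by
    intro i h1 h2
    have := hpre (i-1) (by omega)
    simpa [entry] using this
  have hnep : entry σ p ≠ entry τ p := by
    simpa [entry, hp_def] using hne
  have hexS : ∃ s, p ≤ s ∧ (σ.length ≤ s ∨ ¬ IsAscent σ s) :=
    ⟨σ.length, hpm, Or.inl le_rfl⟩
  set s := Nat.find hexS with hs_def
  obtain ⟨hs1, hs2⟩ := Nat.find_spec hexS
  have hsm : s ≤ σ.length := Nat.find_min' hexS ⟨hpm, Or.inl le_rfl⟩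
  have hrun_full : ∀ t, p ≤ t → t < s → (t < σ.length ∧ IsAscent σ t) := by
    intro t ht1 ht2
    have := Nat.find_min hexS ht2
    push_neg at this
    obtain ⟨h3, h4⟩ := this ht1
    exact ⟨by omega, h4⟩
  have hrunσ : ∀ t, p ≤ t → t < s → IsAscent σ t := fun t h1 h2 => (hrun_full t h1 h2).2
  have hrunτ : ∀ t, p ≤ t → t < s → IsAscent τ t := by
    intro t h1 h2
    have htlen : t < σ.length := (hrun_full t h1 h2).1
    have hnd : ¬ IsDescent σ t := by
      have := hrunσ t h1 h2
      unfold IsAscent at this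
      unfold IsDescent
      omega
    have hmem : t ∉ descSet σ := by
      intro hmem
      exact hnd (mem_descSet.mp hmem).2.2
    rw [← hdesc] at hmem
    have hndτ : ¬ IsDescent τ t := by
      intro hd
      exact hmem (mem_descSet.mpr ⟨by omega, by omega, hd⟩)
    rcases ascent_or_descent (p := t) hτ (by omega) (by omega) with h | h
    · exact h
    · exact absurd h hndτ
  have hAσ : (Finset.Icc p σ.length).filter (fun q => entry σ p ≤ entry σ q)
      = Finset.Icc p s := by
    ext q
    simp only [Finset.mem_filter, Finset.mem_Icc]
    constructor
    · rintro ⟨⟨hq1, hq2⟩, hle⟩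
      refine ⟨hq1, ?_⟩
      by_contra hqs
      push_neg at hqs
      have hslen : s < σ.length := by omega
      have hnd : ¬ IsAscent σ s := by
        rcases hs2 with h | h
        · omega
        · exact h
      have hdesc' : IsDescent σ s := by
        rcases ascent_or_descent (p := s) hσ (by omega) (by omega) with h | h
        · exact absurd h hnd
        · exact h
      have hg := hglob s (by simp only [Finset.mem_Ioo]; omega) hdesc'
      have := hg p q hp1 hs1 hqs hq2
      omega
    · rintro ⟨hq1, hq2⟩
      exact ⟨⟨hq1, by omega⟩, run_ge_asc hrunσ q hq1 hq2⟩
  rcases lt_trichotomy (entry τ p) (entry σ p) with hlt | heq2 | hgt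
  · -- good case: τ lex-smaller
    refine Or.inr (lex_of_firstDiff τ σ k (by omega) hk
      (fun i hi => (hpre i hi).symm) ?_)
    simpa [entry, hp_def] using hlt
  · exact absurd heq2.symm hnep
  · -- contradiction case
    exfalso
    have hcount := count_suffix hσ hτ hlen hp1 hpm hagree (fun x => entry τ p ≤ x)
    have hsub1 : Finset.Icc p s ⊆
        (Finset.Icc p σ.length).filter (fun q => entry τ p ≤ entry τ q) := by
      intro q hq
      simp only [Finset.mem_Icc] at hq
      simp only [Finset.mem_filter, Finset.mem_Icc]
      exact ⟨⟨hq.1, by omega⟩, run_ge_asc hrunτ q hq.1 hq.2⟩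
    have hge : s + 1 - p ≤
        ((Finset.Icc p σ.length).filter (fun q => entry τ p ≤ entry τ q)).card := by
      calc s + 1 - p = (Finset.Icc p s).card := by rw [Nat.card_Icc]
        _ ≤ _ := Finset.card_le_card hsub1
    have hsub2 : (Finset.Icc p σ.length).filter (fun q => entry τ p ≤ entry σ q)
        ⊆ (Finset.Icc p s).erase p := by
      intro q hq
      simp only [Finset.mem_filter, Finset.mem_Icc] at hq
      have hmem : q ∈ Finset.Icc p s := by
        rw [← hAσ]
        simp only [Finset.mem_filter, Finset.mem_Icc]
        exact ⟨hq.1, by omega⟩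
      refine Finset.mem_erase.mpr ⟨?_, hmem⟩
      intro hqp
      subst hqp
      omega
    have hle2 : ((Finset.Icc p σ.length).filter (fun q => entry τ p ≤ entry σ q)).card
        ≤ s - p := by
      calc _ ≤ ((Finset.Icc p s).erase p).card := Finset.card_le_card hsub2
        _ ≤ (Finset.Icc p s).card - 1 := by
            rw [Finset.card_erase_of_mem (by simp only [Finset.mem_Icc]; omega)]
        _ = s - p := by rw [Nat.card_Icc]; omega
    omega

-- ============ canonical lsd word ============

lemma frDex (σ : List ℕ) : ∃ s, 1 ≤ s ∧ (σ.length ≤ s ∨ ¬ IsDescent σ s) :=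
  ⟨max 1 σ.length, Nat.le_max_left 1 _, Or.inl (Nat.le_max_right 1 _)⟩

def firstRunD (σ : List ℕ) : ℕ := Nat.find (frDex σ)

lemma firstRunD_pos (σ : List ℕ) : 1 ≤ firstRunD σ := (Nat.find_spec (frDex σ)).1

lemma firstRunD_spec (σ : List ℕ) :
    σ.length ≤ firstRunD σ ∨ ¬ IsDescent σ (firstRunD σ) := (Nat.find_spec (frDex σ)).2

lemma firstRunD_min (σ : List ℕ) {t : ℕ} (h1 : 1 ≤ t) (h2 : t < firstRunD σ) :
    t < σ.length ∧ IsDescent σ t := by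
  have := Nat.find_min (frDex σ) h2
  push_neg at this
  obtain ⟨h3, h4⟩ := this h1
  exact ⟨by omega, h4⟩

lemma firstRunD_le (σ : List ℕ) (h : σ.length ≠ 0) : firstRunD σ ≤ σ.length :=
  Nat.find_min' (frDex σ) ⟨by omega, Or.inl le_rfl⟩

def canonF : ℕ → ℕ → List ℕ → List ℕ
  | 0, _, _ => []
  | fuel+1, o, σ =>
    if σ.length = 0 then [] else
      (List.range' (o+1) (firstRunD σ)).reverse ++
        canonF fuel (o + firstRunD σ) (σ.drop (firstRunD σ))

lemma canonF_succ (fuel o : ℕ) (σ : List ℕ) :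
    canonF (fuel+1) o σ = if σ.length = 0 then [] else
      (List.range' (o+1) (firstRunD σ)).reverse ++
        canonF fuel (o + firstRunD σ) (σ.drop (firstRunD σ)) := rfl

lemma canonF_perm : ∀ (fuel o : ℕ) (σ : List ℕ), σ.length ≤ fuel →
    (canonF fuel o σ).Perm (List.range' (o+1) σ.length) := by
  intro fuel
  induction fuel with
  | zero =>
    intro o σ h
    have : σ.length = 0 := by omega
    rw [this]
    simp [canonF]
  | succ fuel ih =>
    intro o σ h
    rw [canonF_succ]
    by_cases hne : σ.length = 0
    · rw [if_pos hne, hne]; simp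
    · rw [if_neg hne]
      set b := firstRunD σ with hb_def
      have hb1 : 1 ≤ b := firstRunD_pos σ
      have hble : b ≤ σ.length := firstRunD_le σ hne
      have hdl : (σ.drop b).length = σ.length - b := by simp
      have ihm := ih (o + b) (σ.drop b) (by omega)
      rw [hdl] at ihm
      have h1 : ((List.range' (o+1) b).reverse ++ canonF fuel (o + b) (σ.drop b)).Perm
          (List.range' (o+1) b ++ List.range' (o+b+1) (σ.length - b)) :=
        List.Perm.append (List.reverse_perm _) ihm
      refine h1.trans ?_
      have h2 := List.range'_append (s := o+1) (m := b) (n := σ.length - b) (step := 1)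
      simp only [one_mul] at h2
      have h3 : o + 1 + b = o + b + 1 := by omega
      rw [h3] at h2
      rw [h2]
      have : b + (σ.length - b) = σ.length := by omega
      rw [this]

lemma canonF_length (fuel o : ℕ) (σ : List ℕ) (h : σ.length ≤ fuel) :
    (canonF fuel o σ).length = σ.length := by
  have := (canonF_perm fuel o σ h).length_eq
  simpa using this

lemma canonF_entry_bounds (fuel o : ℕ) (σ : List ℕ) (h : σ.length ≤ fuel)
    {q : ℕ} (h1 : 1 ≤ q) (h2 : q ≤ σ.length) :
    o + 1 ≤ entry (canonF fuel o σ) q ∧ entry (canonF fuel o σ) q ≤ o + σ.length := by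
  have hlen := canonF_length fuel o σ h
  have hq : q - 1 < (canonF fuel o σ).length := by omega
  rw [entry_eq_getElem _ q hq]
  have hmem : (canonF fuel o σ)[q-1] ∈ canonF fuel o σ := List.getElem_mem _
  have := (canonF_perm fuel o σ h).mem_iff.mp hmem
  rw [List.mem_range'_1] at this
  omega

lemma canonF_entry_low (fuel o : ℕ) (σ : List ℕ) (hne : σ.length ≠ 0)
    {q : ℕ} (h1 : 1 ≤ q) (h2 : q ≤ firstRunD σ) :
    entry (canonF (fuel+1) o σ) q = o + 1 + (firstRunD σ - q) := by
  rw [canonF_succ, if_neg hne]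
  have hq : q - 1 < ((List.range' (o+1) (firstRunD σ)).reverse).length := by
    simp only [List.length_reverse, List.length_range']; omega
  rw [entry, List.getD_eq_getElem?_getD, List.getElem?_append_left hq,
    List.getElem?_eq_getElem hq]
  simp only [Option.getD_some]
  rw [List.getElem_reverse, List.getElem_range']
  simp only [List.length_range']
  omega

lemma canonF_entry_high (fuel o : ℕ) (σ : List ℕ) (hne : σ.length = 0 → False)
    {q : ℕ} (h2 : firstRunD σ < q) :
    entry (canonF (fuel+1) o σ) q
      = entry (canonF fuel (o + firstRunD σ) (σ.drop (firstRunD σ))) (q - firstRunD σ) := by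
  rw [canonF_succ, if_neg (by intro h; exact hne h)]
  set b := firstRunD σ with hb_def
  set L := (List.range' (o+1) b).reverse with hL_def
  have hLlen : L.length = b := by simp [hL_def]
  rw [entry, entry, List.getD_eq_getElem?_getD, List.getD_eq_getElem?_getD,
    List.getElem?_append_right (by omega)]
  congr 2
  omega

lemma canonF_desc : ∀ (fuel o : ℕ) (σ : List ℕ), σ.length ≤ fuel →
    ∀ p, 1 ≤ p → p + 1 ≤ σ.length →
    (IsDescent (canonF fuel o σ) p ↔ IsDescent σ p) := by
  intro fuel
  induction fuel with
  | zero => intro o σ h p h1 h2; omega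
  | succ fuel ih =>
    intro o σ h p h1 h2
    have hne : σ.length ≠ 0 := by omega
    have hb1 : 1 ≤ firstRunD σ := firstRunD_pos σ
    have hble : firstRunD σ ≤ σ.length := firstRunD_le σ hne
    rcases Nat.lt_trichotomy p (firstRunD σ) with hp | hp | hp
    · have hσd := (firstRunD_min σ h1 hp).2
      have e1 := canonF_entry_low fuel o σ hne h1 (by omega)
      have e2 := canonF_entry_low fuel o σ hne (show 1 ≤ p+1 by omega)
        (show p+1 ≤ firstRunD σ by omega)
      constructor
      · intro _; exact hσd
      · intro _; unfold IsDescent; rw [e1, e2]; omega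
    · have hσnd : ¬ IsDescent σ p := by
        rcases firstRunD_spec σ with hs | hs
        · omega
        · rwa [← hp] at hs
      have e1 := canonF_entry_low fuel o σ hne h1 (le_of_eq hp)
      have e2 := canonF_entry_high fuel o σ (fun hx => hne hx) (show firstRunD σ < p + 1 by omega)
      have hdl : (σ.drop (firstRunD σ)).length = σ.length - firstRunD σ := by simp
      have hbnd := canonF_entry_bounds fuel (o + firstRunD σ) (σ.drop (firstRunD σ))
        (by rw [hdl]; omega) (q := p + 1 - firstRunD σ) (by omega) (by rw [hdl]; omega)
      constructor
      · intro hd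
        exfalso
        unfold IsDescent at hd
        rw [e1, e2] at hd
        omega
      · intro hd; exact absurd hd hσnd
    · have e1 := canonF_entry_high fuel o σ (fun hx => hne hx) hp
      have e2 := canonF_entry_high fuel o σ (fun hx => hne hx) (show firstRunD σ < p + 1 by omega)
      have hdl : (σ.drop (firstRunD σ)).length = σ.length - firstRunD σ := by simp
      have ihp := ih (o + firstRunD σ) (σ.drop (firstRunD σ)) (by rw [hdl]; omega)
        (p - firstRunD σ) (by omega) (by rw [hdl]; omega)
      have hdrop := isDescent_drop σ (firstRunD σ) (p - firstRunD σ) (by omega)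
      have hpb : firstRunD σ + (p - firstRunD σ) = p := by omega
      rw [hpb] at hdrop
      have heq : IsDescent (canonF (fuel+1) o σ) p
          ↔ IsDescent (canonF fuel (o + firstRunD σ) (σ.drop (firstRunD σ))) (p - firstRunD σ) := by
        unfold IsDescent
        rw [e1, e2]
        have hx : p + 1 - firstRunD σ = (p - firstRunD σ) + 1 := by omega
        rw [hx]
      rw [heq, ihp, hdrop]

lemma canonF_glob : ∀ (fuel o : ℕ) (σ : List ℕ), σ.length ≤ fuel →
    ∀ p, 0 < p → p < σ.length → IsAscent (canonF fuel o σ) p →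
    IsGlobalAscent (canonF fuel o σ) p := by
  intro fuel
  induction fuel with
  | zero => intro o σ h p h1 h2; omega
  | succ fuel ih =>
    intro o σ h p h1 h2 hasc
    have hne : σ.length ≠ 0 := by omega
    have hb1 : 1 ≤ firstRunD σ := firstRunD_pos σ
    have hble : firstRunD σ ≤ σ.length := firstRunD_le σ hne
    have hdl : (σ.drop (firstRunD σ)).length = σ.length - firstRunD σ := by simp
    have hclen : (canonF (fuel+1) o σ).length = σ.length := canonF_length _ o σ h
    rcases Nat.lt_trichotomy p (firstRunD σ) with hp | hp | hp
    · exfalso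
      have e1 := canonF_entry_low fuel o σ hne (by omega) (show p ≤ firstRunD σ by omega)
      have e2 := canonF_entry_low fuel o σ hne (show 1 ≤ p+1 by omega)
        (show p+1 ≤ firstRunD σ by omega)
      unfold IsAscent at hasc
      rw [e1, e2] at hasc
      omega
    · intro i j hi1 hi2 hj1 hj2
      rw [hclen] at hj2
      have ei := canonF_entry_low fuel o σ hne hi1 (by omega)
      have ej := canonF_entry_high fuel o σ (fun hx => hne hx) (show firstRunD σ < j by omega)
      have hbnd := canonF_entry_bounds fuel (o + firstRunD σ) (σ.drop (firstRunD σ))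
        (by rw [hdl]; omega) (q := j - firstRunD σ) (by omega) (by rw [hdl]; omega)
      rw [ei, ej]
      omega
    · have e1 := canonF_entry_high fuel o σ (fun hx => hne hx) hp
      have e2 := canonF_entry_high fuel o σ (fun hx => hne hx) (show firstRunD σ < p + 1 by omega)
      have hMasc : IsAscent (canonF fuel (o + firstRunD σ) (σ.drop (firstRunD σ))) (p - firstRunD σ) := by
        unfold IsAscent at hasc ⊢
        rw [e1, e2] at hasc
        have hx : p + 1 - firstRunD σ = (p - firstRunD σ) + 1 := by omega
        rwa [hx] at hasc
      have ihg := ih (o + firstRunD σ) (σ.drop (firstRunD σ)) (by rw [hdl]; omega)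
        (p - firstRunD σ) (by omega) (by rw [hdl]; omega) hMasc
      intro i j hi1 hi2 hj1 hj2
      rw [hclen] at hj2
      have ej := canonF_entry_high fuel o σ (fun hx => hne hx) (show firstRunD σ < j by omega)
      rcases le_or_gt i (firstRunD σ) with hib | hib
      · have ei := canonF_entry_low fuel o σ hne hi1 hib
        have hbnd := canonF_entry_bounds fuel (o + firstRunD σ) (σ.drop (firstRunD σ))
          (by rw [hdl]; omega) (q := j - firstRunD σ) (by omega) (by rw [hdl]; omega)
        rw [ei, ej]
        omega
      · have ei := canonF_entry_high fuel o σ (fun hx => hne hx) hib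
        rw [ei, ej]
        exact ihg (i - firstRunD σ) (j - firstRunD σ) (by omega) (by omega) (by omega)
          (by rw [canonF_length fuel (o + firstRunD σ) (σ.drop (firstRunD σ)) (by rw [hdl]; omega), hdl]; omega)

-- ============ canonical lld word ============

lemma frAex (σ : List ℕ) : ∃ s, 1 ≤ s ∧ (σ.length ≤ s ∨ IsDescent σ s) :=
  ⟨max 1 σ.length, Nat.le_max_left 1 _, Or.inl (Nat.le_max_right 1 _)⟩

def firstRunA (σ : List ℕ) : ℕ := Nat.find (frAex σ)

lemma firstRunA_pos (σ : List ℕ) : 1 ≤ firstRunA σ := (Nat.find_spec (frAex σ)).1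

lemma firstRunA_spec (σ : List ℕ) :
    σ.length ≤ firstRunA σ ∨ IsDescent σ (firstRunA σ) := (Nat.find_spec (frAex σ)).2

lemma firstRunA_min (σ : List ℕ) {t : ℕ} (h1 : 1 ≤ t) (h2 : t < firstRunA σ) :
    t < σ.length ∧ ¬ IsDescent σ t := by
  have := Nat.find_min (frAex σ) h2
  push_neg at this
  obtain ⟨h3, h4⟩ := this h1
  exact ⟨by omega, h4⟩

lemma firstRunA_le (σ : List ℕ) (h : σ.length ≠ 0) : firstRunA σ ≤ σ.length :=
  Nat.find_min' (frAex σ) ⟨by omega, Or.inl le_rfl⟩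

def canonDF : ℕ → List ℕ → List ℕ
  | 0, _ => []
  | fuel+1, σ =>
    if σ.length = 0 then [] else
      List.range' (σ.length - firstRunA σ + 1) (firstRunA σ) ++
        canonDF fuel (σ.drop (firstRunA σ))

lemma canonDF_succ (fuel : ℕ) (σ : List ℕ) :
    canonDF (fuel+1) σ = if σ.length = 0 then [] else
      List.range' (σ.length - firstRunA σ + 1) (firstRunA σ) ++
        canonDF fuel (σ.drop (firstRunA σ)) := rfl

lemma canonDF_perm : ∀ (fuel : ℕ) (σ : List ℕ), σ.length ≤ fuel →
    (canonDF fuel σ).Perm (List.range' 1 σ.length) := by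
  intro fuel
  induction fuel with
  | zero =>
    intro σ h
    have : σ.length = 0 := by omega
    rw [this]
    simp [canonDF]
  | succ fuel ih =>
    intro σ h
    rw [canonDF_succ]
    by_cases hne : σ.length = 0
    · rw [if_pos hne, hne]; simp
    · rw [if_neg hne]
      have hb1 : 1 ≤ firstRunA σ := firstRunA_pos σ
      have hble : firstRunA σ ≤ σ.length := firstRunA_le σ hne
      have hdl : (σ.drop (firstRunA σ)).length = σ.length - firstRunA σ := by simp
      have ihm := ih (σ.drop (firstRunA σ)) (by rw [hdl]; omega)
      rw [hdl] at ihm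
      have h1 : (List.range' (σ.length - firstRunA σ + 1) (firstRunA σ) ++
            canonDF fuel (σ.drop (firstRunA σ))).Perm
          (List.range' (σ.length - firstRunA σ + 1) (firstRunA σ) ++
            List.range' 1 (σ.length - firstRunA σ)) :=
        List.Perm.append (List.Perm.refl _) ihm
      refine h1.trans ?_
      refine (List.perm_append_comm).trans ?_
      have h2 := List.range'_append (s := 1) (m := σ.length - firstRunA σ) (n := firstRunA σ) (step := 1)
      simp only [one_mul] at h2
      have h3 : 1 + (σ.length - firstRunA σ) = σ.length - firstRunA σ + 1 := by omega
      rw [h3] at h2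
      rw [h2]
      have h4 : σ.length - firstRunA σ + firstRunA σ = σ.length := by omega
      rw [h4]

lemma canonDF_length (fuel : ℕ) (σ : List ℕ) (h : σ.length ≤ fuel) :
    (canonDF fuel σ).length = σ.length := by
  have := (canonDF_perm fuel σ h).length_eq
  simpa using this

lemma canonDF_entry_bounds (fuel : ℕ) (σ : List ℕ) (h : σ.length ≤ fuel)
    {q : ℕ} (h1 : 1 ≤ q) (h2 : q ≤ σ.length) :
    1 ≤ entry (canonDF fuel σ) q ∧ entry (canonDF fuel σ) q ≤ σ.length := by
  have hlen := canonDF_length fuel σ h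
  have hq : q - 1 < (canonDF fuel σ).length := by omega
  rw [entry_eq_getElem _ q hq]
  have hmem : (canonDF fuel σ)[q-1] ∈ canonDF fuel σ := List.getElem_mem _
  have := (canonDF_perm fuel σ h).mem_iff.mp hmem
  rw [List.mem_range'_1] at this
  omega

lemma canonDF_entry_low (fuel : ℕ) (σ : List ℕ) (hne : σ.length ≠ 0)
    {q : ℕ} (h1 : 1 ≤ q) (h2 : q ≤ firstRunA σ) :
    entry (canonDF (fuel+1) σ) q = σ.length - firstRunA σ + q := by
  rw [canonDF_succ, if_neg hne]
  have hq : q - 1 < (List.range' (σ.length - firstRunA σ + 1) (firstRunA σ)).length := by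
    simp only [List.length_range']; omega
  rw [entry, List.getD_eq_getElem?_getD, List.getElem?_append_left hq,
    List.getElem?_eq_getElem hq]
  simp only [Option.getD_some]
  rw [List.getElem_range']
  omega

lemma canonDF_entry_high (fuel : ℕ) (σ : List ℕ) (hne : σ.length = 0 → False)
    {q : ℕ} (h2 : firstRunA σ < q) :
    entry (canonDF (fuel+1) σ) q
      = entry (canonDF fuel (σ.drop (firstRunA σ))) (q - firstRunA σ) := by
  rw [canonDF_succ, if_neg (by intro hx; exact hne hx)]
  rw [entry, entry, List.getD_eq_getElem?_getD, List.getD_eq_getElem?_getD,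
    List.getElem?_append_right (by simp only [List.length_range']; omega)]
  congr 2
  simp only [List.length_range']
  omega

lemma canonDF_desc : ∀ (fuel : ℕ) (σ : List ℕ), σ.length ≤ fuel →
    ∀ p, 1 ≤ p → p + 1 ≤ σ.length →
    (IsDescent (canonDF fuel σ) p ↔ IsDescent σ p) := by
  intro fuel
  induction fuel with
  | zero => intro σ h p h1 h2; omega
  | succ fuel ih =>
    intro σ h p h1 h2
    have hne : σ.length ≠ 0 := by omega
    have hb1 : 1 ≤ firstRunA σ := firstRunA_pos σ
    have hble : firstRunA σ ≤ σ.length := firstRunA_le σ hne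
    have hdl : (σ.drop (firstRunA σ)).length = σ.length - firstRunA σ := by simp
    rcases Nat.lt_trichotomy p (firstRunA σ) with hp | hp | hp
    · have hσnd := (firstRunA_min σ h1 hp).2
      have e1 := canonDF_entry_low fuel σ hne h1 (by omega)
      have e2 := canonDF_entry_low fuel σ hne (show 1 ≤ p+1 by omega)
        (show p+1 ≤ firstRunA σ by omega)
      constructor
      · intro hd
        exfalso
        unfold IsDescent at hd
        rw [e1, e2] at hd
        omega
      · intro hd; exact absurd hd hσnd
    · have hσd : IsDescent σ p := by
        rcases firstRunA_spec σ with hs | hs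
        · omega
        · rwa [← hp] at hs
      have e1 := canonDF_entry_low fuel σ hne h1 (le_of_eq hp)
      have e2 := canonDF_entry_high fuel σ (fun hx => hne hx) (show firstRunA σ < p + 1 by omega)
      have hbnd := canonDF_entry_bounds fuel (σ.drop (firstRunA σ))
        (by rw [hdl]; omega) (q := p + 1 - firstRunA σ) (by omega) (by rw [hdl]; omega)
      rw [hdl] at hbnd
      constructor
      · intro _; exact hσd
      · intro _
        unfold IsDescent
        rw [e1, e2]
        omega
    · have e1 := canonDF_entry_high fuel σ (fun hx => hne hx) hp
      have e2 := canonDF_entry_high fuel σ (fun hx => hne hx) (show firstRunA σ < p + 1 by omega)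
      have ihp := ih (σ.drop (firstRunA σ)) (by rw [hdl]; omega)
        (p - firstRunA σ) (by omega) (by rw [hdl]; omega)
      have hdrop := isDescent_drop σ (firstRunA σ) (p - firstRunA σ) (by omega)
      have hpb : firstRunA σ + (p - firstRunA σ) = p := by omega
      rw [hpb] at hdrop
      have heq : IsDescent (canonDF (fuel+1) σ) p
          ↔ IsDescent (canonDF fuel (σ.drop (firstRunA σ))) (p - firstRunA σ) := by
        unfold IsDescent
        rw [e1, e2]
        have hx : p + 1 - firstRunA σ = (p - firstRunA σ) + 1 := by omega
        rw [hx]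
      rw [heq, ihp, hdrop]

lemma canonDF_glob : ∀ (fuel : ℕ) (σ : List ℕ), σ.length ≤ fuel →
    ∀ p, 0 < p → p < σ.length → IsDescent (canonDF fuel σ) p →
    IsGlobalDescent (canonDF fuel σ) p := by
  intro fuel
  induction fuel with
  | zero => intro σ h p h1 h2; omega
  | succ fuel ih =>
    intro σ h p h1 h2 hdsc
    have hne : σ.length ≠ 0 := by omega
    have hb1 : 1 ≤ firstRunA σ := firstRunA_pos σ
    have hble : firstRunA σ ≤ σ.length := firstRunA_le σ hne
    have hdl : (σ.drop (firstRunA σ)).length = σ.length - firstRunA σ := by simp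
    have hclen : (canonDF (fuel+1) σ).length = σ.length := canonDF_length _ σ h
    rcases Nat.lt_trichotomy p (firstRunA σ) with hp | hp | hp
    · exfalso
      have e1 := canonDF_entry_low fuel σ hne (by omega) (show p ≤ firstRunA σ by omega)
      have e2 := canonDF_entry_low fuel σ hne (show 1 ≤ p+1 by omega)
        (show p+1 ≤ firstRunA σ by omega)
      unfold IsDescent at hdsc
      rw [e1, e2] at hdsc
      omega
    · intro i j hi1 hi2 hj1 hj2
      rw [hclen] at hj2
      have ei := canonDF_entry_low fuel σ hne hi1 (by omega)
      have ej := canonDF_entry_high fuel σ (fun hx => hne hx) (show firstRunA σ < j by omega)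
      have hbnd := canonDF_entry_bounds fuel (σ.drop (firstRunA σ))
        (by rw [hdl]; omega) (q := j - firstRunA σ) (by omega) (by rw [hdl]; omega)
      rw [hdl] at hbnd
      rw [ei, ej]
      omega
    · have e1 := canonDF_entry_high fuel σ (fun hx => hne hx) hp
      have e2 := canonDF_entry_high fuel σ (fun hx => hne hx) (show firstRunA σ < p + 1 by omega)
      have hMdsc : IsDescent (canonDF fuel (σ.drop (firstRunA σ))) (p - firstRunA σ) := by
        unfold IsDescent at hdsc ⊢
        rw [e1, e2] at hdsc
        have hx : p + 1 - firstRunA σ = (p - firstRunA σ) + 1 := by omega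
        rwa [hx] at hdsc
      have ihg := ih (σ.drop (firstRunA σ)) (by rw [hdl]; omega)
        (p - firstRunA σ) (by omega) (by rw [hdl]; omega) hMdsc
      intro i j hi1 hi2 hj1 hj2
      rw [hclen] at hj2
      have ej := canonDF_entry_high fuel σ (fun hx => hne hx) (show firstRunA σ < j by omega)
      rcases le_or_gt i (firstRunA σ) with hib | hib
      · have ei := canonDF_entry_low fuel σ hne hi1 hib
        have hbnd := canonDF_entry_bounds fuel (σ.drop (firstRunA σ))
          (by rw [hdl]; omega) (q := j - firstRunA σ) (by omega) (by rw [hdl]; omega)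
        rw [hdl] at hbnd
        rw [ei, ej]
        omega
      · have ei := canonDF_entry_high fuel σ (fun hx => hne hx) hib
        rw [ei, ej]
        exact ihg (i - firstRunA σ) (j - firstRunA σ) (by omega) (by omega) (by omega)
          (by rw [canonDF_length fuel (σ.drop (firstRunA σ)) (by rw [hdl]; omega), hdl]; omega)

lemma lexLE_antisymm {σ τ : List ℕ} (h1 : lexLE σ τ) (h2 : lexLE τ σ) : σ = τ := by
  rcases h1 with h | h
  · exact h
  · rcases h2 with h2 | h2
    · exact h2.symm
    · exact absurd h2 (fun hx => lex_asymm h hx)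

/-- A permutation word is lexicographically smallest in its descent class (lsd) iff every
ascent is a global ascent; dually it is lexicographically largest in its descent class
(lld) iff every descent is a global descent. -/
theorem stmt14 (σ : List ℕ) (hσ : IsPermWord σ) :
    ((∀ τ : List ℕ, IsPermWord τ → τ.length = σ.length → descSet τ = descSet σ →
        lexLE σ τ) ↔
      (∀ p ∈ Finset.Ioo 0 σ.length, IsAscent σ p → IsGlobalAscent σ p)) ∧
    ((∀ τ : List ℕ, IsPermWord τ → τ.length = σ.length → descSet τ = descSet σ →
        lexLE τ σ) ↔
      (∀ p ∈ Finset.Ioo 0 σ.length, IsDescent σ p → IsGlobalDescent σ p)) := by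
  constructor
  · constructor
    · intro hlsd
      have hlen : (canonF σ.length 0 σ).length = σ.length := canonF_length _ _ _ le_rfl
      have hperm : IsPermWord (canonF σ.length 0 σ) := by
        unfold IsPermWord
        rw [hlen]
        exact canonF_perm σ.length 0 σ le_rfl
      have hdesc : descSet (canonF σ.length 0 σ) = descSet σ := by
        ext i
        rw [mem_descSet, mem_descSet, hlen]
        constructor
        · rintro ⟨a, b, c⟩
          exact ⟨a, b, (canonF_desc σ.length 0 σ le_rfl i (by omega) (by omega)).mp c⟩
        · rintro ⟨a, b, c⟩
          exact ⟨a, b, (canonF_desc σ.length 0 σ le_rfl i (by omega) (by omega)).mpr c⟩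
      have hglobc : ∀ p ∈ Finset.Ioo 0 (canonF σ.length 0 σ).length,
          IsAscent (canonF σ.length 0 σ) p → IsGlobalAscent (canonF σ.length 0 σ) p := by
        intro p hp ha
        rw [Finset.mem_Ioo, hlen] at hp
        exact canonF_glob σ.length 0 σ le_rfl p hp.1 hp.2 ha
      have h1 : lexLE (canonF σ.length 0 σ) σ :=
        key_lsd (canonF σ.length 0 σ) σ hperm hσ (by rw [hlen]) hdesc.symm hglobc
      have h2 : lexLE σ (canonF σ.length 0 σ) := hlsd _ hperm hlen hdesc
      have heq : σ = canonF σ.length 0 σ := lexLE_antisymm h2 h1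
      intro p hp hasc
      rw [Finset.mem_Ioo] at hp
      have hasc' : IsAscent (canonF σ.length 0 σ) p := by rw [← heq]; exact hasc
      have hg := canonF_glob σ.length 0 σ le_rfl p hp.1 hp.2 hasc'
      rw [heq]
      exact hg
    · intro hglob τ hτ hlen hdesc
      exact key_lsd σ τ hσ hτ hlen hdesc hglob
  · constructor
    · intro hlld
      have hlen : (canonDF σ.length σ).length = σ.length := canonDF_length _ _ le_rfl
      have hperm : IsPermWord (canonDF σ.length σ) := by
        unfold IsPermWord
        rw [hlen]
        exact canonDF_perm σ.length σ le_rfl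
      have hdesc : descSet (canonDF σ.length σ) = descSet σ := by
        ext i
        rw [mem_descSet, mem_descSet, hlen]
        constructor
        · rintro ⟨a, b, c⟩
          exact ⟨a, b, (canonDF_desc σ.length σ le_rfl i (by omega) (by omega)).mp c⟩
        · rintro ⟨a, b, c⟩
          exact ⟨a, b, (canonDF_desc σ.length σ le_rfl i (by omega) (by omega)).mpr c⟩
      have hglobc : ∀ p ∈ Finset.Ioo 0 (canonDF σ.length σ).length,
          IsDescent (canonDF σ.length σ) p → IsGlobalDescent (canonDF σ.length σ) p := by
        intro p hp ha
        rw [Finset.mem_Ioo, hlen] at hp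
        exact canonDF_glob σ.length σ le_rfl p hp.1 hp.2 ha
      have h1 : lexLE σ (canonDF σ.length σ) :=
        key_lld (canonDF σ.length σ) σ hperm hσ (by rw [hlen]) hdesc.symm hglobc
      have h2 : lexLE (canonDF σ.length σ) σ := hlld _ hperm hlen hdesc
      have heq : σ = canonDF σ.length σ := lexLE_antisymm h1 h2
      intro p hp hdsc
      rw [Finset.mem_Ioo] at hp
      have hdsc' : IsDescent (canonDF σ.length σ) p := by rw [← heq]; exact hdsc
      have hg := canonDF_glob σ.length σ le_rfl p hp.1 hp.2 hdsc'
      rw [heq]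
      exact hg
    · intro hglob τ hτ hlen hdesc
      exact key_lld σ τ hσ hτ hlen hdesc hglob
end

section
/- Within each descent class of Sₘ, the restriction of the left weak order has a unique minimal element, and this minimal element is the lexicographically smallest permutation in the class; moreover there is a unique maximal element, which is the lexicographically largest in the class. -/
/-- The set of inversions of a word (0-based index pairs `(i,j)`, `i < j`, `sᵢ > sⱼ`). -/
def invSet (σ : List ℕ) : Finset (ℕ × ℕ) :=
  ((Finset.range σ.length) ×ˢ (Finset.range σ.length)).filter
    (fun p => p.1 < p.2 ∧ σ.getD p.2 0 < σ.getD p.1 0)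

/-- Membership of the descent class of `D` in `Sₘ`. -/
def InClass (m : ℕ) (D : Finset ℕ) (σ : List ℕ) : Prop :=
  σ.length = m ∧ IsPermWord σ ∧ descSet σ = D


namespace Stmt16Aux

variable {m : ℕ} {D : Finset ℕ}


def downRun (D : Finset ℕ) : ℕ → ℕ
  | 0 => 0
  | p+1 => if p+1 ∈ D then downRun D p + 1 else 0

def upRunF (D : Finset ℕ) : ℕ → ℕ → ℕ
  | 0, _ => 0
  | f+1, p => if p+1 ∈ D then upRunF D f (p+1) + 1 else 0


theorem downRun_le (p : ℕ) : downRun D p ≤ p := by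
  induction p with
  | zero => simp [downRun]
  | succ p ih => rw [downRun]; split <;> omega

theorem mem_of_downRun (p : ℕ) : ∀ k, p - downRun D p < k → k ≤ p → k ∈ D := by
  induction p with
  | zero => intro k h1 h2; omega
  | succ p ih =>
    rw [downRun]; split
    · rename_i hm
      intro k h1 h2
      rcases Nat.lt_or_ge k (p+1) with h | h
      · exact ih k (by have := downRun_le (D := D) p; omega) (by omega)
      · have : k = p + 1 := by omega
        exact this ▸ hm
    · intro k h1 h2; omega

theorem start_not_mem (hD : D ⊆ Finset.Ioo 0 m) (p : ℕ) : p - downRun D p ∉ D := by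
  induction p with
  | zero => intro h; have := hD h; simp at this
  | succ p ih =>
    rw [downRun]; split
    · simpa using ih
    · assumption

theorem mem_of_upRunF (f p : ℕ) : ∀ k, p < k → k ≤ p + upRunF D f p → k ∈ D := by
  induction f generalizing p with
  | zero => intro k h1 h2; simp [upRunF] at h2; omega
  | succ f ih =>
    rw [upRunF]; split
    · rename_i hm
      intro k h1 h2
      rcases Nat.lt_or_ge (p+1) k with h | h
      · exact ih (p+1) k h (by omega)
      · have : k = p + 1 := by omega
        exact this ▸ hm
    · intro k h1 h2; omega

theorem upRunF_succ_not_mem (hD : D ⊆ Finset.Ioo 0 m) (f p : ℕ) (hf : m ≤ f + p) :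
    p + upRunF D f p + 1 ∉ D := by
  induction f generalizing p with
  | zero =>
    simp only [upRunF]
    intro h; have := hD h; simp at this; omega
  | succ f ih =>
    rw [upRunF]; split
    · rename_i hm
      have := ih (p+1) (by omega)
      simpa [Nat.add_assoc, Nat.add_comm, Nat.add_left_comm] using this
    · simpa using ‹p + 1 ∉ D›












def upRun (m : ℕ) (D : Finset ℕ) (p : ℕ) : ℕ := upRunF D m p

theorem mem_of_upRun (p : ℕ) : ∀ k, p < k → k ≤ p + upRun m D p → k ∈ D :=
  mem_of_upRunF m p

theorem upRun_succ_not_mem (hD : D ⊆ Finset.Ioo 0 m) (p : ℕ) :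
    p + upRun m D p + 1 ∉ D :=
  upRunF_succ_not_mem hD m p (by omega)

theorem downRun_char (hD : D ⊆ Finset.Ioo 0 m) (p k : ℕ) (hk : k ≤ p)
    (hmem : ∀ j, p - k < j → j ≤ p → j ∈ D) (hnot : p - k ∉ D) : downRun D p = k := by
  rcases Nat.lt_trichotomy (downRun D p) k with h | h | h
  · have hle := downRun_le (D := D) p
    exact absurd (hmem (p - downRun D p) (by omega) (by omega)) (start_not_mem hD p)
  · exact h
  · have hle := downRun_le (D := D) p
    exact absurd (mem_of_downRun p (p - k) (by omega) (by omega)) hnot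

theorem upRun_char (hD : D ⊆ Finset.Ioo 0 m) (p k : ℕ)
    (hmem : ∀ j, p < j → j ≤ p + k → j ∈ D) (hnot : p + k + 1 ∉ D) : upRun m D p = k := by
  rcases Nat.lt_trichotomy (upRun m D p) k with h | h | h
  · exact absurd (hmem (p + upRun m D p + 1) (by omega) (by omega)) (upRun_succ_not_mem hD p)
  · exact h
  · exact absurd (mem_of_upRun (m := m) p (p + k + 1) (by omega) (by omega)) hnot

/-- value of the minimal word at position `p` (1-based values, 0-based positions). -/
def fmin (m : ℕ) (D : Finset ℕ) (p : ℕ) : ℕ := p + 1 + upRun m D p - downRun D p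

theorem block_downRun (hD : D ⊆ Finset.Ioo 0 m) (p q : ℕ)
    (h1 : p - downRun D p ≤ q) (h2 : q ≤ p + upRun m D p) :
    downRun D q = q - (p - downRun D p) := by
  refine downRun_char hD q _ (by omega) (fun j hj1 hj2 => ?_) (by
    have : q - (q - (p - downRun D p)) = p - downRun D p := by omega
    rw [this]; exact start_not_mem hD p)
  have hj1' : p - downRun D p < j := by omega
  rcases le_or_gt j p with h | h
  · exact mem_of_downRun p j hj1' h
  · exact mem_of_upRun (m := m) p j h (by omega)

theorem block_upRun (hD : D ⊆ Finset.Ioo 0 m) (p q : ℕ)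
    (h1 : p - downRun D p ≤ q) (h2 : q ≤ p + upRun m D p) :
    upRun m D q = p + upRun m D p - q := by
  refine upRun_char hD q _ (fun j hj1 hj2 => ?_) (by
    have : q + (p + upRun m D p - q) + 1 = p + upRun m D p + 1 := by omega
    rw [this]; exact upRun_succ_not_mem hD p)
  rcases le_or_gt j p with h | h
  · exact mem_of_downRun p j (by omega) h
  · exact mem_of_upRun (m := m) p j h (by omega)

theorem fmin_block (hD : D ⊆ Finset.Ioo 0 m) (p q : ℕ)
    (h1 : p - downRun D p ≤ q) (h2 : q ≤ p + upRun m D p) :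
    fmin m D q = (p - downRun D p) + (p + upRun m D p) + 1 - q := by
  have hd := block_downRun hD p q h1 h2
  have hu := block_upRun hD p q h1 h2
  have := downRun_le (D := D) p
  unfold fmin; omega

theorem fmin_cross (hD : D ⊆ Finset.Ioo 0 m) (p q : ℕ) (h : p + upRun m D p < q) :
    fmin m D p < fmin m D q := by
  have haq : p + upRun m D p + 1 ≤ q - downRun D q := by
    by_contra h'
    exact upRun_succ_not_mem hD p
      (mem_of_downRun q _ (by omega) (by omega))
  have hp := fmin_block hD p p (by omega) (by omega)
  have hq := fmin_block hD q q (by omega) (by omega)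
  have := downRun_le (D := D) p
  have := downRun_le (D := D) q
  omega

theorem fmin_same_block (hD : D ⊆ Finset.Ioo 0 m) (p q : ℕ)
    (h1 : p < q) (h2 : q ≤ p + upRun m D p) :
    fmin m D q < fmin m D p := by
  have hp := fmin_block hD p p (by omega) (by omega)
  have hq := fmin_block hD p q (by omega) h2
  have := downRun_le (D := D) p
  omega

theorem fmin_inj (hD : D ⊆ Finset.Ioo 0 m) (p q : ℕ) (h : p < q) :
    fmin m D p ≠ fmin m D q := by
  rcases le_or_gt q (p + upRun m D p) with h2 | h2
  · exact (fmin_same_block hD p q h h2).ne'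
  · exact (fmin_cross hD p q h2).ne

theorem fmin_pos (hD : D ⊆ Finset.Ioo 0 m) (p : ℕ) : 1 ≤ fmin m D p := by
  have := downRun_le (D := D) p; unfold fmin; omega

theorem fmin_le (hD : D ⊆ Finset.Ioo 0 m) (p : ℕ) (hp : p < m) : fmin m D p ≤ m := by
  have hb : p + upRun m D p < m := by
    rcases Nat.eq_zero_or_pos (upRun m D p) with h | h
    · omega
    · have := hD (mem_of_upRun p (p + upRun m D p) (by omega) le_rfl)
      simp at this; omega
  have := downRun_le (D := D) p
  unfold fmin; omega

theorem upRunF_eq_zero (f p : ℕ) (h : p + 1 ∉ D) : upRunF D f p = 0 := by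
  cases f <;> simp [upRunF, h]

theorem upRun_pos (p : ℕ) (hm : 1 ≤ m) (h : p + 1 ∈ D) : 1 ≤ upRun m D p := by
  unfold upRun
  obtain ⟨f, rfl⟩ : ∃ f, m = f + 1 := ⟨m - 1, by omega⟩
  rw [upRunF, if_pos h]; omega






theorem mem_invSet {σ : List ℕ} {i j : ℕ} :
    (i, j) ∈ invSet σ ↔ i < j ∧ j < σ.length ∧ σ.getD j 0 < σ.getD i 0 := by
  simp only [invSet, Finset.mem_filter, Finset.mem_product, Finset.mem_range]
  constructor
  · rintro ⟨⟨h1, h2⟩, h3, h4⟩; exact ⟨h3, h2, h4⟩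
  · rintro ⟨h1, h2, h3⟩; exact ⟨⟨by omega, h2⟩, h1, h3⟩

theorem nodup_of_permWord {σ : List ℕ} (h : IsPermWord σ) : σ.Nodup :=
  h.nodup_iff.mpr (List.nodup_range')

theorem getD_ne {σ : List ℕ} (h : σ.Nodup) {i j : ℕ} (hi : i < σ.length)
    (hj : j < σ.length) (hij : i ≠ j) : σ.getD i 0 ≠ σ.getD j 0 := by
  rw [List.getD_eq_getElem σ 0 hi, List.getD_eq_getElem σ 0 hj]
  intro hc
  exact hij (List.Nodup.getElem_inj_iff h |>.mp hc)

/-- If all of `(i, j]` are descents of `τ`, positions `i < j` form an inversion. -/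
theorem forced_inv {τ : List ℕ} {D : Finset ℕ} (hd : descSet τ = D) {i j : ℕ}
    (hij : i < j) (hjm : j < τ.length) (hk : ∀ k, i < k → k ≤ j → k ∈ D) :
    τ.getD j 0 < τ.getD i 0 := by
  induction j with
  | zero => omega
  | succ j ih =>
    have hj1 : (j + 1 : ℕ) ∈ descSet τ := hd ▸ hk (j+1) (by omega) le_rfl
    simp only [descSet, Finset.mem_filter, Finset.mem_Ioo] at hj1
    have hstep : τ.getD (j+1) 0 < τ.getD j 0 := by simpa using hj1.2
    rcases Nat.lt_or_ge i j with h | h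
    · exact hstep.trans (ih (by omega) (by omega) (fun k h1 h2 => hk k h1 (by omega)))
    · have : i = j := by omega
      subst this; exact hstep

/-- If none of `(i, j]` are descents of `τ`, then `τᵢ < τⱼ`. -/
theorem forced_noninv {τ : List ℕ} {D : Finset ℕ} (hp : IsPermWord τ) (hd : descSet τ = D)
    {i j : ℕ} (hij : i < j) (hjm : j < τ.length) (hk : ∀ k, i < k → k ≤ j → k ∉ D) :
    τ.getD i 0 < τ.getD j 0 := by
  induction j with
  | zero => omega
  | succ j ih =>
    have hj1 : (j + 1 : ℕ) ∉ descSet τ := fun h => hk (j+1) (by omega) le_rfl (hd ▸ h)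
    simp only [descSet, Finset.mem_filter, Finset.mem_Ioo] at hj1
    push_neg at hj1
    have hstep : τ.getD j 0 < τ.getD (j+1) 0 := by
      have hne := getD_ne (nodup_of_permWord hp) (i := j) (j := j+1) (by omega) hjm (by omega)
      have := hj1 ⟨by omega, hjm⟩
      simp only [Nat.add_sub_cancel] at this
      omega
    rcases Nat.lt_or_ge i j with h | h
    · exact (ih (by omega) (by omega) (fun k h1 h2 => hk k h1 (by omega))).trans hstep
    · have : i = j := by omega
      subst this; exact hstep



variable {m : ℕ} {D : Finset ℕ}

def minWord (m : ℕ) (D : Finset ℕ) : List ℕ := (List.range m).map (fmin m D)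

theorem minWord_length : (minWord m D).length = m := by simp [minWord]

theorem minWord_getD (p : ℕ) (hp : p < m) : (minWord m D).getD p 0 = fmin m D p := by
  rw [minWord, List.getD_eq_getElem _ 0 (by simpa using hp)]
  simp

theorem minWord_isPermWord (hD : D ⊆ Finset.Ioo 0 m) : IsPermWord (minWord m D) := by
  rw [IsPermWord, minWord_length]
  refine List.Subperm.perm_of_length_le (List.Nodup.subperm ?_ ?_) (by simp [minWord])
  · refine List.Nodup.map_on ?_ (List.nodup_range)
    intro x hx y hy hxy
    by_contra hne
    rcases Nat.lt_or_ge x y with h | h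
    · exact fmin_inj hD x y h hxy
    · exact fmin_inj hD y x (by omega) hxy.symm
  · intro x hx
    simp only [minWord, List.mem_map, List.mem_range] at hx
    obtain ⟨p, hp, rfl⟩ := hx
    have := fmin_pos hD p
    have := fmin_le hD p hp
    rw [List.mem_range'_1]
    omega

theorem minWord_descSet (hD : D ⊆ Finset.Ioo 0 m) : descSet (minWord m D) = D := by
  ext i
  simp only [descSet, Finset.mem_filter, Finset.mem_Ioo, minWord_length]
  constructor
  · rintro ⟨⟨hi0, him⟩, hlt⟩
    rw [minWord_getD i him, minWord_getD (i-1) (by omega)] at hlt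
    by_contra hiD
    have hup : upRun m D (i-1) = 0 := upRunF_eq_zero m (i-1) (by
      have : i - 1 + 1 = i := by omega
      rw [this]; exact hiD)
    have := fmin_cross hD (i-1) i (by omega)
    omega
  · intro hiD
    have him := hD hiD
    simp only [Finset.mem_Ioo] at him
    refine ⟨him, ?_⟩
    rw [minWord_getD i him.2, minWord_getD (i-1) (by omega)]
    have hup : 1 ≤ upRun m D (i-1) := by
      refine upRun_pos (i-1) (by omega) ?_
      have : i - 1 + 1 = i := by omega
      rw [this]; exact hiD
    exact fmin_same_block hD (i-1) i (by omega) (by omega)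

theorem minWord_inClass (hD : D ⊆ Finset.Ioo 0 m) : InClass m D (minWord m D) :=
  ⟨minWord_length, minWord_isPermWord hD, minWord_descSet hD⟩

/-- every inversion of the minimal word is forced: `(i,j]` consists of descents. -/
theorem minWord_inv_forced (hD : D ⊆ Finset.Ioo 0 m) {i j : ℕ}
    (h : (i, j) ∈ invSet (minWord m D)) : ∀ k, i < k → k ≤ j → k ∈ D := by
  rw [mem_invSet, minWord_length] at h
  obtain ⟨hij, hjm, hlt⟩ := h
  rw [minWord_getD i (by omega), minWord_getD j hjm] at hlt
  have hjb : j ≤ i + upRun m D i := by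
    by_contra hc
    have := fmin_cross hD i j (by omega)
    omega
  intro k h1 h2
  exact mem_of_upRun (m := m) i k h1 (by omega)

/-- the minimal word's inversions are contained in those of every class member. -/
theorem minWord_min (hD : D ⊆ Finset.Ioo 0 m) {τ : List ℕ} (hτ : InClass m D τ) :
    invSet (minWord m D) ⊆ invSet τ := by
  rintro ⟨i, j⟩ h
  have hf := minWord_inv_forced hD h
  rw [mem_invSet, minWord_length] at h
  rw [mem_invSet, hτ.1]
  exact ⟨h.1, h.2.1, forced_inv hτ.2.2 h.1 (by rw [hτ.1]; exact h.2.1) hf⟩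



theorem upRun_eq_zero {m : ℕ} {D : Finset ℕ} (p : ℕ) (h : p + 1 ∉ D) : upRun m D p = 0 :=
  upRunF_eq_zero m p h

section M
variable {m : ℕ} {D : Finset ℕ}


def maxWord (m : ℕ) (D : Finset ℕ) : List ℕ :=
  (List.range m).map (fun p => m + 1 - fmin m (Finset.Ioo 0 m \ D) p)

theorem maxWord_length : (maxWord m D).length = m := by simp [maxWord]

theorem maxWord_getD (p : ℕ) (hp : p < m) :
    (maxWord m D).getD p 0 = m + 1 - fmin m (Finset.Ioo 0 m \ D) p := by
  rw [maxWord, List.getD_eq_getElem _ 0 (by simpa using hp)]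
  simp

theorem maxWord_isPermWord (hD : D ⊆ Finset.Ioo 0 m) : IsPermWord (maxWord m D) := by
  have hsub : Finset.Ioo 0 m \ D ⊆ Finset.Ioo 0 m := Finset.sdiff_subset
  rw [IsPermWord, maxWord_length]
  refine List.Subperm.perm_of_length_le (List.Nodup.subperm ?_ ?_) (by simp [maxWord])
  · refine List.Nodup.map_on ?_ (List.nodup_range)
    intro x hx y hy hxy
    simp only [List.mem_range] at hx hy
    by_contra hne
    have bx1 := fmin_pos hsub x
    have by1 := fmin_pos hsub y
    have bx2 := fmin_le hsub x hx
    have by2 := fmin_le hsub y hy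
    have heq : fmin m (Finset.Ioo 0 m \ D) x = fmin m (Finset.Ioo 0 m \ D) y := by omega
    rcases Nat.lt_or_ge x y with h | h
    · exact fmin_inj hsub x y h heq
    · exact fmin_inj hsub y x (by omega) heq.symm
  · intro x hx
    simp only [maxWord, List.mem_map, List.mem_range] at hx
    obtain ⟨p, hp, rfl⟩ := hx
    have := fmin_pos hsub p
    have := fmin_le hsub p hp
    rw [List.mem_range'_1]
    omega

theorem maxWord_descSet (hD : D ⊆ Finset.Ioo 0 m) : descSet (maxWord m D) = D := by
  have hsub : Finset.Ioo 0 m \ D ⊆ Finset.Ioo 0 m := Finset.sdiff_subset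
  ext i
  simp only [descSet, Finset.mem_filter, Finset.mem_Ioo, maxWord_length]
  constructor
  · rintro ⟨⟨hi0, him⟩, hlt⟩
    rw [maxWord_getD i him, maxWord_getD (i-1) (by omega)] at hlt
    by_contra hiD
    have hiD' : i ∈ Finset.Ioo 0 m \ D := by
      rw [Finset.mem_sdiff, Finset.mem_Ioo]; exact ⟨⟨hi0, him⟩, hiD⟩
    have hup : 1 ≤ upRun m (Finset.Ioo 0 m \ D) (i-1) := by
      refine upRun_pos (i-1) (by omega) ?_
      have : i - 1 + 1 = i := by omega
      rw [this]; exact hiD'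
    have h1 := fmin_same_block hsub (i-1) i (by omega) (by omega)
    have h2 := fmin_pos hsub i
    have h3 := fmin_le hsub (i-1) (by omega)
    omega
  · intro hiD
    have him := hD hiD
    simp only [Finset.mem_Ioo] at him
    refine ⟨him, ?_⟩
    rw [maxWord_getD i him.2, maxWord_getD (i-1) (by omega)]
    have hiD' : i ∉ Finset.Ioo 0 m \ D := by
      rw [Finset.mem_sdiff]; tauto
    have hup : upRun m (Finset.Ioo 0 m \ D) (i-1) = 0 := upRun_eq_zero (i-1) (by
      have : i - 1 + 1 = i := by omega
      rw [this]; exact hiD')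
    have h1 := fmin_cross hsub (i-1) i (by omega)
    have h2 := fmin_pos hsub (i-1)
    have h3 := fmin_le hsub i him.2
    omega

theorem maxWord_inClass (hD : D ⊆ Finset.Ioo 0 m) : InClass m D (maxWord m D) :=
  ⟨maxWord_length, maxWord_isPermWord hD, maxWord_descSet hD⟩

theorem maxWord_max (hD : D ⊆ Finset.Ioo 0 m) {τ : List ℕ} (hτ : InClass m D τ) :
    invSet τ ⊆ invSet (maxWord m D) := by
  have hsub : Finset.Ioo 0 m \ D ⊆ Finset.Ioo 0 m := Finset.sdiff_subset
  rintro ⟨i, j⟩ h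
  rw [mem_invSet, hτ.1] at h
  obtain ⟨hij, hjm, hlt⟩ := h
  rw [mem_invSet, maxWord_length]
  refine ⟨hij, hjm, ?_⟩
  rw [maxWord_getD i (by omega), maxWord_getD j hjm]
  have hex : ∃ k, i < k ∧ k ≤ j ∧ k ∈ D := by
    by_contra hc
    push_neg at hc
    have := forced_noninv hτ.2.1 hτ.2.2 hij (by rw [hτ.1]; exact hjm) hc
    omega
  obtain ⟨k, hk1, hk2, hk3⟩ := hex
  have hcross : i + upRun m (Finset.Ioo 0 m \ D) i < j := by
    by_contra hc
    have hmem : k ∈ Finset.Ioo 0 m \ D := mem_of_upRun (m := m) (D := Finset.Ioo 0 m \ D) i k hk1 (by omega)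
    rw [Finset.mem_sdiff] at hmem
    exact hmem.2 hk3
  have h1 := fmin_cross hsub i j hcross
  have h2 := fmin_pos hsub i
  have h3 := fmin_le hsub j hjm
  omega

end M
theorem lex_of_firstDiff {σ τ : List ℕ} (i : ℕ) (hi : i < σ.length) (hi' : i < τ.length)
    (hpre : ∀ k, k < i → σ.getD k 0 = τ.getD k 0) (h : σ.getD i 0 < τ.getD i 0) :
    List.Lex (· < ·) σ τ := by
  induction i generalizing σ τ with
  | zero =>
    cases σ with
    | nil => simp at hi
    | cons a s =>
      cases τ with
      | nil => simp at hi'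
      | cons b t =>
        exact List.Lex.rel (by simpa using h)
  | succ i ih =>
    cases σ with
    | nil => simp at hi
    | cons a s =>
      cases τ with
      | nil => simp at hi'
      | cons b t =>
        have hab : a = b := by simpa using hpre 0 (by omega)
        subst hab
        refine List.Lex.cons (ih (by simpa using hi) (by simpa using hi') ?_ (by simpa using h))
        intro k hk
        simpa using hpre (k+1) (by omega)

/-- Weak order (inversion-set inclusion) implies lexicographic order. -/
theorem lexLE_of_inv_subset {σ τ : List ℕ} (hσ : IsPermWord σ) (hτ : IsPermWord τ)
    (hlen : σ.length = τ.length) (hsub : invSet σ ⊆ invSet τ) : lexLE σ τ := by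
  by_cases heq : σ = τ
  · exact Or.inl heq
  refine Or.inr ?_
  set n := σ.length with hn
  have hex : ∃ i, σ.getD i 0 ≠ τ.getD i 0 := by
    by_contra hc
    push_neg at hc
    exact heq (List.ext_getElem (by omega) (fun i h1 h2 => by
      have := hc i
      rwa [List.getD_eq_getElem σ 0 h1, List.getD_eq_getElem τ 0 h2] at this))
  classical
  set i := Nat.find hex with hi
  have hdiff : σ.getD i 0 ≠ τ.getD i 0 := Nat.find_spec hex
  have hpre : ∀ k, k < i → σ.getD k 0 = τ.getD k 0 := fun k hk => by
    by_contra hc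
    exact absurd (Nat.find_min hex hk) (by simpa using hc)
  have hin : i < n := by
    by_contra hc
    exact hdiff (by rw [List.getD_eq_default σ 0 (by omega),
      List.getD_eq_default τ 0 (by omega)])
  refine lex_of_firstDiff i hin (by omega) hpre ?_
  -- counting argument
  have hνσ : σ.Nodup := nodup_of_permWord hσ
  have hντ : τ.Nodup := nodup_of_permWord hτ
  -- the two words are permutations of each other
  have hperm : σ.Perm τ := by
    have h1 : σ.Perm (List.range' 1 n) := hσ
    have h2' : τ.Perm (List.range' 1 τ.length) := hτ
    rw [← hlen] at h2'
    exact h1.trans h2'.symm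
  -- equal prefixes
  have htake : σ.take i = τ.take i := by
    refine List.ext_getElem (by simp; omega) (fun k h1 h2 => ?_)
    simp only [List.getElem_take]
    have := hpre k (by simp at h1; omega)
    rwa [List.getD_eq_getElem σ 0 (by simp at h1; omega),
      List.getD_eq_getElem τ 0 (by simp at h2; omega)] at this
  -- suffixes are permutations of each other
  have hdropperm : (σ.drop i).Perm (τ.drop i) := by
    have h1 : σ.take i ++ σ.drop i = σ := List.take_append_drop i σ
    have h2 : τ.take i ++ τ.drop i = τ := List.take_append_drop i τ
    have := hperm
    rw [← h1, ← h2, htake] at this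
    exact (List.perm_append_left_iff _).mp this
  have hT : (σ.drop i).toFinset = (τ.drop i).toFinset := by
    ext x; simp only [List.mem_toFinset]
    exact ⟨fun h => hdropperm.mem_iff.mp h, fun h => hdropperm.mem_iff.mpr h⟩
  set T := (σ.drop i).toFinset with hTdef
  -- index extraction
  have hidx : ∀ x ∈ T, ∃ j, i ≤ j ∧ j < n ∧ σ.getD j 0 = x := by
    intro x hx
    rw [hTdef, List.mem_toFinset] at hx
    obtain ⟨k, hk, hkx⟩ := List.getElem_of_mem hx
    refine ⟨i + k, by omega, by simp at hk; omega, ?_⟩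
    rw [List.getD_eq_getElem σ 0 (by simp at hk; omega)]
    rw [← hkx, List.getElem_drop]
  have hidxτ : ∀ x ∈ T, ∃ j, i ≤ j ∧ j < n ∧ τ.getD j 0 = x := by
    intro x hx
    rw [hT, List.mem_toFinset] at hx
    obtain ⟨k, hk, hkx⟩ := List.getElem_of_mem hx
    refine ⟨i + k, by omega, by simp at hk; omega, ?_⟩
    rw [List.getD_eq_getElem τ 0 (by simp at hk; omega)]
    rw [← hkx, List.getElem_drop]
  have hσiT : σ.getD i 0 ∈ T := by
    rw [hTdef, List.mem_toFinset]
    rw [List.getD_eq_getElem σ 0 hin]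
    have : σ[i] = (σ.drop i)[0]'(by simp; omega) := by simp
    rw [this]; exact List.getElem_mem _
  have hτiT : τ.getD i 0 ∈ T := by
    rw [hT, List.mem_toFinset]
    rw [List.getD_eq_getElem τ 0 (by omega)]
    have : τ[i] = (τ.drop i)[0]'(by simp; omega) := by simp
    rw [this]; exact List.getElem_mem _
  -- membership of τ values with index ≥ i in T
  have hmemτ : ∀ j, i ≤ j → j < n → τ.getD j 0 ∈ T := by
    intro j h1 h2
    rw [hT, List.mem_toFinset]
    rw [List.getD_eq_getElem τ 0 (by omega)]
    have : τ[j]'(by omega) = (τ.drop i)[j - i]'(by simp; omega) := by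
      rw [List.getElem_drop]; congr 1; omega
    rw [this]; exact List.getElem_mem _
  -- the cardinality comparison
  have hcard : (T.filter (· < σ.getD i 0)).card ≤ (T.filter (· < τ.getD i 0)).card := by
    classical
    refine Finset.card_le_card_of_injOn
      (fun x => if h : ∃ j, i ≤ j ∧ j < n ∧ σ.getD j 0 = x then τ.getD h.choose 0 else 0)
      ?_ ?_
    · intro x hx
      rw [Finset.mem_coe, Finset.mem_filter] at hx
      obtain ⟨hxT, hxlt⟩ := hx
      have hex' := hidx x hxT
      beta_reduce
      rw [dif_pos hex']
      obtain ⟨hj1, hj2, hj3⟩ := hex'.choose_spec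
      set j := hex'.choose
      have hji : i < j := by
        rcases Nat.lt_or_ge i j with h | h
        · exact h
        · exfalso; have : j = i := by omega
          rw [this] at hj3; omega
      have hinv : (i, j) ∈ invSet σ := mem_invSet.mpr ⟨hji, by omega, by omega⟩
      have hinvτ := hsub hinv
      rw [mem_invSet] at hinvτ
      rw [Finset.mem_coe, Finset.mem_filter]
      exact ⟨hmemτ j (by omega) hj2, hinvτ.2.2⟩
    · intro x hx y hy hxy
      rw [Finset.mem_coe, Finset.mem_filter] at hx hy
      have hexx := hidx x hx.1
      have hexy := hidx y hy.1
      beta_reduce at hxy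
      rw [dif_pos hexx, dif_pos hexy] at hxy
      obtain ⟨hx1, hx2, hx3⟩ := hexx.choose_spec
      obtain ⟨hy1, hy2, hy3⟩ := hexy.choose_spec
      have : hexx.choose = hexy.choose := by
        by_contra hc
        exact getD_ne hντ (by omega) (by omega) hc hxy
      rw [← hx3, ← hy3, this]
  -- conclude
  rcases Nat.lt_or_ge (σ.getD i 0) (τ.getD i 0) with h | h
  · exact h
  exfalso
  have hτσ : τ.getD i 0 < σ.getD i 0 := by omega
  have hssub : T.filter (· < τ.getD i 0) ⊂ T.filter (· < σ.getD i 0) := by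
    constructor
    · intro x hx
      rw [Finset.mem_filter] at hx ⊢
      exact ⟨hx.1, by omega⟩
    · intro hc
      have h1 : τ.getD i 0 ∈ T.filter (· < σ.getD i 0) :=
        Finset.mem_filter.mpr ⟨hτiT, hτσ⟩
      have h2 := hc h1
      rw [Finset.mem_filter] at h2
      omega
  have := Finset.card_lt_card hssub
  omega


end Stmt16Aux

/-- In each descent class of `Sₘ` the left weak order (inclusion of inversion sets) has a
unique smallest element, which is the lexicographically smallest member of the class,
and a unique largest element, which is the lexicographically largest member. -/
theorem stmt16 (m : ℕ) (D : Finset ℕ) (hD : D ⊆ Finset.Ioo 0 m) :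
    (∃! σ : List ℕ, InClass m D σ ∧
        ∀ τ : List ℕ, InClass m D τ → invSet σ ⊆ invSet τ) ∧
    (∀ σ : List ℕ, InClass m D σ →
        (∀ τ : List ℕ, InClass m D τ → invSet σ ⊆ invSet τ) →
        ∀ τ : List ℕ, InClass m D τ → lexLE σ τ) ∧
    (∃! σ : List ℕ, InClass m D σ ∧
        ∀ τ : List ℕ, InClass m D τ → invSet τ ⊆ invSet σ) ∧
    (∀ σ : List ℕ, InClass m D σ →
        (∀ τ : List ℕ, InClass m D τ → invSet τ ⊆ invSet σ) →
        ∀ τ : List ℕ, InClass m D τ → lexLE τ σ) := by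
  classical
  have hmin := Stmt16Aux.minWord_inClass hD
  have hminmin : ∀ τ, InClass m D τ → invSet (Stmt16Aux.minWord m D) ⊆ invSet τ :=
    fun τ hτ => Stmt16Aux.minWord_min hD hτ
  have hmax := Stmt16Aux.maxWord_inClass hD
  have hmaxmax : ∀ τ, InClass m D τ → invSet τ ⊆ invSet (Stmt16Aux.maxWord m D) :=
    fun τ hτ => Stmt16Aux.maxWord_max hD hτ
  have key : ∀ σ τ, InClass m D σ → InClass m D τ → invSet σ ⊆ invSet τ → lexLE σ τ :=
    fun σ τ hσ hτ hsub =>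
      Stmt16Aux.lexLE_of_inv_subset hσ.2.1 hτ.2.1 (hσ.1.trans hτ.1.symm) hsub
  have anti : ∀ σ τ, lexLE σ τ → lexLE τ σ → σ = τ := by
    intro σ τ h1 h2
    have h1' : σ = τ ∨ List.Lex (· < ·) σ τ := h1
    have h2' : τ = σ ∨ List.Lex (· < ·) τ σ := h2
    rcases h1' with rfl | h1'
    · rfl
    rcases h2' with rfl | h2'
    · rfl
    · exact absurd h2' (asymm h1')
  refine ⟨⟨Stmt16Aux.minWord m D, ⟨hmin, hminmin⟩, ?_⟩, ?_,
    ⟨Stmt16Aux.maxWord m D, ⟨hmax, hmaxmax⟩, ?_⟩, ?_⟩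
  · rintro σ ⟨hσ, hσmin⟩
    exact anti _ _ (key _ _ hσ hmin (hσmin _ hmin)) (key _ _ hmin hσ (hminmin _ hσ))
  · intro σ hσ hσmin τ hτ
    exact key _ _ hσ hτ (hσmin τ hτ)
  · rintro σ ⟨hσ, hσmax⟩
    exact anti _ _ (key _ _ hσ hmax (hmaxmax _ hσ)) (key _ _ hmax hσ (hσmax _ hmax))
  · intro σ hσ hσmax τ hτ
    exact key _ _ hτ hσ (hσmax τ hτ)
end
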